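/- With notation as before (K ≅ F_{q^n} embedded in k^{n×n} via a normal basis, A the Frobenius permutation matrix), for every B ∈ K and every ℓ with 1 ≤ ℓ ≤ n-1, trace(B A^ℓ) = 0. -/

import Mathlib

open Matrix

/-- An element of a finite field extension fixed by `x ↦ x ^ card k` lies in
the image of the base field. -/
lemma aux_fixed_mem_range {k K : Type*} [Field k] [Fintype k] [Field K] [Fintype K]
    [Algebra k K] (S : K) (hS : S ^ Fintype.card k = S) :
    ∃ c : k, algebraMap k K c = S := by
  classical
  set q := Fintype.card k with hq
  have hq1 : 1 < q := Fintype.one_lt_card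
  set P : Polynomial K := Polynomial.X ^ q - Polynomial.X with hP
  have hPne : P ≠ 0 := FiniteField.X_pow_card_sub_X_ne_zero K hq1
  have hdeg : P.natDegree = q := FiniteField.X_pow_card_sub_X_natDegree_eq K hq1
  have hroot : ∀ x : K, x ^ q = x → x ∈ P.roots.toFinset := by
    intro x hx
    rw [Multiset.mem_toFinset, Polynomial.mem_roots hPne]
    simp [hP, Polynomial.IsRoot, sub_eq_zero, hx]
  set T : Finset K := Finset.univ.image (algebraMap k K) with hT
  have hTsub : T ⊆ P.roots.toFinset := by
    intro x hx
    simp only [hT, Finset.mem_image] at hx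
    obtain ⟨c, -, rfl⟩ := hx
    exact hroot _ (by rw [← map_pow, FiniteField.pow_card])
  have hcardT : T.card = q := by
    rw [hT, Finset.card_image_of_injective _ (algebraMap k K).injective, Finset.card_univ]
  have hcardR : P.roots.toFinset.card ≤ q := by
    calc P.roots.toFinset.card ≤ Multiset.card P.roots := P.roots.toFinset_card_le
      _ ≤ P.natDegree := P.card_roots'
      _ = q := hdeg
  have hTeq : T = P.roots.toFinset :=
    Finset.eq_of_subset_of_card_le hTsub (hcardR.trans_eq hcardT.symm)
  have hmem : S ∈ T := hTeq ▸ hroot S hS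
  obtain ⟨c, -, hc⟩ := Finset.mem_image.mp hmem
  exact ⟨c, hc⟩

open Fin.NatCast Fin.CommRing in
theorem trace_mulMatrix_mul_pow_frobenius_perm_eq_zero
    {k K : Type*} [Field k] [Fintype k] [Field K] [Fintype K] [Algebra k K]
    {n : ℕ} [NeZero n] (γ : K) (b : Module.Basis (Fin n) k K)
    (hb : ∀ i : Fin n, b i = γ ^ (Fintype.card k ^ (i : ℕ)))
    (A : Matrix (Fin n) (Fin n) k)
    (hA : ∀ i j : Fin n, A i j = if i = j + 1 then 1 else 0)
    (β : K) :
    ∀ ℓ : ℕ, 1 ≤ ℓ → ℓ ≤ n - 1 →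
      Matrix.trace (Algebra.leftMulMatrix b β * A ^ ℓ) = 0 := by
  intro ℓ hℓ1 hℓ2
  classical
  set q := Fintype.card k with hqdef
  have hq1 : 1 < q := Fintype.one_lt_card
  have hn1 : 1 ≤ n := Nat.one_le_iff_ne_zero.mpr (NeZero.ne n)
  have hn2 : 2 ≤ n := by omega
  have hℓn : ℓ < n := by omega
  -- characteristic facts
  obtain ⟨p, hpk⟩ := CharP.exists k
  haveI := hpk
  obtain ⟨f, hp, hqpf⟩ := FiniteField.card k p
  haveI : CharP K p := charP_of_injective_algebraMap (algebraMap k K).injective p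
  haveI : Fact p.Prime := ⟨hp⟩
  -- cardinality of K
  have cardK : Fintype.card K = q ^ n := by
    rw [Module.card_fintype b, Fintype.card_fin]
  have hKn : ∀ x : K, x ^ q ^ n = x := fun x => by
    rw [← cardK]; exact FiniteField.pow_card x
  have hKns : ∀ (s : ℕ) (x : K), x ^ (q ^ n) ^ s = x := by
    intro s
    induction s with
    | zero => intro x; simp
    | succ s ih => intro x; rw [pow_succ, pow_mul, ih, hKn]
  have hmod : ∀ (x : K) (t : ℕ), x ^ q ^ (t % n) = x ^ q ^ t := by
    intro x t
    conv_rhs => rw [← Nat.div_add_mod t n]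
    rw [pow_add, pow_mul x, pow_mul q, hKns]
  have hkfix : ∀ (c : k) (t : ℕ), c ^ q ^ t = c := by
    intro c t
    induction t with
    | zero => simp
    | succ t ih => rw [pow_succ, pow_mul, ih, FiniteField.pow_card]
  -- powers of basis vectors
  have hbpow : ∀ (m : Fin n) (t : ℕ), b m ^ q ^ t = b (m + (t : Fin n)) := by
    intro m t
    rw [hb, hb, ← pow_mul, ← pow_add]
    have hv : ((m + (t : Fin n)) : Fin n).val = (m.val + t) % n := by
      simp [Fin.add_def, Nat.add_mod_mod]
    rw [hv, hmod]
  -- the Frobenius shift on coordinates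
  have hshift : ∀ (t : ℕ) (x : K) (j : Fin n),
      b.repr (x ^ q ^ t) j = b.repr x (j - (t : Fin n)) := by
    intro t x j
    have hx : x ^ q ^ t = ∑ m : Fin n, b.repr x (m - (t : Fin n)) • b m := by
      conv_lhs => rw [← b.sum_repr x]
      have hqe : q ^ t = p ^ ((f : ℕ) * t) := by rw [pow_mul, hqdef, hqpf]
      rw [hqe, sum_pow_char_pow, ← hqe]
      refine Fintype.sum_equiv (Equiv.addRight (t : Fin n)) _ _ (fun m => ?_)
      rw [Equiv.coe_addRight, add_sub_cancel_right, smul_pow, hkfix, hbpow]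
    rw [hx]
    exact congrFun (b.repr_sum_self _) j
  -- entries of powers of A
  have hApow : ∀ (t : ℕ) (i j : Fin n),
      (A ^ t) i j = if i = j + (t : Fin n) then 1 else 0 := by
    intro t
    induction t with
    | zero => intro i j; simp [Matrix.one_apply]
    | succ t ih =>
      intro i j
      rw [pow_succ, Matrix.mul_apply]
      rw [Finset.sum_eq_single_of_mem (j + 1) (Finset.mem_univ _)
        (fun m _ hm => by rw [hA, if_neg hm, mul_zero])]
      rw [hA, if_pos rfl, mul_one, ih]
      have hcast : j + ((t + 1 : ℕ) : Fin n) = j + 1 + (t : Fin n) := by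
        push_cast; ring
      rw [hcast]
  -- trace as a sum of coordinates
  have htr : Matrix.trace (Algebra.leftMulMatrix b β * A ^ ℓ) =
      ∑ i : Fin n, b.repr (β * b (i + (ℓ : Fin n))) i := by
    simp only [Matrix.trace, Matrix.diag]
    refine Finset.sum_congr rfl (fun i _ => ?_)
    rw [Matrix.mul_apply]
    rw [Finset.sum_eq_single_of_mem (i + (ℓ : Fin n)) (Finset.mem_univ _)
      (fun m _ hm => by rw [hApow, if_neg (by simpa [eq_comm] using hm), mul_zero])]
    rw [hApow, if_pos rfl, mul_one, Algebra.leftMulMatrix_eq_repr_mul]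
  -- rewrite each summand
  have hterm : ∀ i : Fin n, b.repr (β * b (i + (ℓ : Fin n))) i =
      b.repr (β ^ q ^ (n - i.val) * b (ℓ : Fin n)) 0 := by
    intro i
    have hti : ((n - i.val : ℕ) : Fin n) = -i := by
      rw [Nat.cast_sub i.isLt.le, Fin.natCast_self, zero_sub, Fin.cast_val_eq_self]
    have hh := hshift (n - i.val) (β * b (i + (ℓ : Fin n))) 0
    rw [hti, zero_sub, neg_neg] at hh
    rw [← hh, mul_pow, hbpow, hti]
    have h2 : i + (ℓ : Fin n) + -i = (ℓ : Fin n) := by ring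
    rw [h2]
  -- sum the Frobenius orbit
  set S : K := ∑ i : Fin n, β ^ q ^ (n - i.val) with hSdef
  have hsum : ∑ i : Fin n, b.repr (β ^ q ^ (n - i.val) * b (ℓ : Fin n)) 0 =
      b.repr (S * b (ℓ : Fin n)) 0 := by
    simp only [← Module.Basis.coord_apply]
    rw [hSdef, Finset.sum_mul, map_sum]
  have hS' : S = ∑ i : Fin n, β ^ q ^ (i.val) := by
    rw [hSdef]
    refine Fintype.sum_equiv (Equiv.neg (Fin n)) _ _ (fun i => ?_)
    rw [Equiv.neg_apply, ← hmod β (n - i.val)]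
    congr 2
  have hone : (1 : Fin n).val = 1 := by
    rw [Fin.val_one']
    exact Nat.mod_eq_of_lt hn2
  have hSq : S ^ q = S := by
    have hqe1 : q = p ^ (f : ℕ) := by rw [hqdef, hqpf]
    rw [hS', hqe1, sum_pow_char_pow, ← hqe1]
    refine Fintype.sum_equiv (Equiv.addRight (1 : Fin n)) _ _ (fun i => ?_)
    rw [Equiv.coe_addRight, ← pow_mul, ← pow_succ, ← hmod β (i.val + 1)]
    congr 2
    simp [Fin.add_def, hone]
  obtain ⟨c, hc⟩ := aux_fixed_mem_range S hSq
  have hLne : (ℓ : Fin n) ≠ 0 := by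
    intro h
    have : (ℓ : Fin n).val = 0 := by rw [h]; rfl
    rw [Fin.val_natCast, Nat.mod_eq_of_lt hℓn] at this
    omega
  rw [htr]
  calc (∑ i : Fin n, b.repr (β * b (i + (ℓ : Fin n))) i)
      = ∑ i : Fin n, b.repr (β ^ q ^ (n - i.val) * b (ℓ : Fin n)) 0 :=
        Finset.sum_congr rfl (fun i _ => hterm i)
    _ = b.repr (S * b (ℓ : Fin n)) 0 := hsum
    _ = 0 := by
        rw [← hc, ← Algebra.smul_def]
        simp [Module.Basis.repr_self, Finsupp.single_apply, hLne]
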